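/- Let A be an n×n complex matrix, D = diag(d₁,…,d_m) a real diagonal m×m matrix, B = diag(b₁,…,b_m) with each b_k = ±1, and let ρ : ℝ → M_m(ℂ) satisfy ρ(x)* = B ρ(x) B for all x. Suppose Π : ℝ → M_{n×m}(ℂ) and S : ℝ → M_n(ℂ) are differentiable with Π′(x) = −i A Π(x) D + Π(x)[D, ρ(x)] and S′(x) = Π(x) D B Π(x)*, and that the matrix identity A S(0) − S(0) A* = i Π(0) B Π(0)* holds at x = 0. Then A S(x) − S(x) A* = i Π(x) B Π(x)* holds for all x ∈ ℝ. -/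

import Mathlib

open Matrix

lemma hdMul {p q r : Type*} [Fintype q] (M : ℝ → Matrix p q ℂ) (N : ℝ → Matrix q r ℂ)
    (M' : Matrix p q ℂ) (N' : Matrix q r ℂ) (x : ℝ)
    (hM : ∀ i j, HasDerivAt (fun y => M y i j) (M' i j) x)
    (hN : ∀ i j, HasDerivAt (fun y => N y i j) (N' i j) x) :
    ∀ i j, HasDerivAt (fun y => (M y * N y) i j) ((M' * N x + M x * N') i j) x := by
  intro i j
  have h : HasDerivAt (fun y => ∑ k, M y i k * N y k j)
      (∑ k, (M' i k * N x k j + M x i k * N' k j)) x :=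
    HasDerivAt.fun_sum (fun k _ => (hM i k).mul (hN k j))
  simpa [Matrix.mul_apply, Matrix.add_apply, Finset.sum_add_distrib] using h

lemma hdConjT {p q : Type*} (M : ℝ → Matrix p q ℂ) (M' : Matrix p q ℂ) (x : ℝ)
    (hM : ∀ i j, HasDerivAt (fun y => M y i j) (M' i j) x) :
    ∀ i j, HasDerivAt (fun y => (M y)ᴴ i j) (M'ᴴ i j) x := by
  intro i j
  simpa [Matrix.conjTranspose_apply] using (hM j i).star

lemma keyAlg {n m : ℕ} (A : Matrix (Fin n) (Fin n) ℂ)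
    (D B r : Matrix (Fin m) (Fin m) ℂ) (P : Matrix (Fin n) (Fin m) ℂ)
    (hBB : B * B = 1) (hDB : D * B = B * D) (hDH : Dᴴ = D) (hBH : Bᴴ = B)
    (hr : rᴴ = B * r * B) :
    A * (P * D * B * Pᴴ) - (P * D * B * Pᴴ) * Aᴴ =
      Complex.I • ( ((-Complex.I) • (A * P * D) + P * (D * r - r * D)) * B * Pᴴ
        + P * B * (((-Complex.I) • (A * P * D) + P * (D * r - r * D)))ᴴ ) := by
  have h1 : (((-Complex.I) • (A * P * D) + P * (D * r - r * D)))ᴴ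
      = Complex.I • (D * Pᴴ * Aᴴ) + (rᴴ * D - D * rᴴ) * Pᴴ := by
    simp [Matrix.conjTranspose_add, Matrix.conjTranspose_smul, Matrix.conjTranspose_mul,
      Matrix.conjTranspose_sub, hDH, Matrix.sub_mul, Matrix.mul_assoc]
  rw [h1]
  have hBr : B * rᴴ = r * B := by
    rw [hr, ← Matrix.mul_assoc, ← Matrix.mul_assoc, hBB, Matrix.one_mul]
  have hBDr : B * (D * rᴴ) = D * (r * B) := by
    rw [← Matrix.mul_assoc, ← hDB, Matrix.mul_assoc, hBr]
  have hBrD : B * (rᴴ * D) = r * (D * B) := by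
    rw [← Matrix.mul_assoc, hBr, Matrix.mul_assoc, hDB]
  simp only [Matrix.add_mul, Matrix.sub_mul, Matrix.mul_add, Matrix.mul_sub,
    Matrix.smul_mul, Matrix.mul_smul, smul_add, smul_sub, smul_smul,
    Complex.I_mul_I, neg_mul, neg_smul, one_smul, smul_neg, neg_neg, mul_neg,
    Matrix.neg_mul, Matrix.mul_assoc]
  rw [show P * (B * (rᴴ * (D * Pᴴ))) = P * (r * (D * (B * Pᴴ))) by
        rw [← Matrix.mul_assoc rᴴ D, ← Matrix.mul_assoc B, hBrD]
        simp [Matrix.mul_assoc],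
      show P * (B * (D * (rᴴ * Pᴴ))) = P * (D * (r * (B * Pᴴ))) by
        rw [← Matrix.mul_assoc D rᴴ, ← Matrix.mul_assoc B, hBDr]
        simp [Matrix.mul_assoc],
      show P * (B * (D * (Pᴴ * Aᴴ))) = P * (D * (B * (Pᴴ * Aᴴ))) by
        rw [← Matrix.mul_assoc B D, ← hDB, Matrix.mul_assoc]]
  abel

/-- If the matrix identity `AS − SA* = iΠBΠ*` holds at `x = 0`, then it holds for all `x`. -/
theorem stmt_1 {n m : ℕ}
    (A : Matrix (Fin n) (Fin n) ℂ)
    (d b : Fin m → ℝ) (hb : ∀ k, b k = 1 ∨ b k = -1)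
    (D B : Matrix (Fin m) (Fin m) ℂ)
    (hD : D = Matrix.diagonal (fun k => (d k : ℂ)))
    (hB : B = Matrix.diagonal (fun k => (b k : ℂ)))
    (ρ : ℝ → Matrix (Fin m) (Fin m) ℂ)
    (hρ : ∀ x, (ρ x)ᴴ = B * ρ x * B)
    (Pm : ℝ → Matrix (Fin n) (Fin m) ℂ)
    (S : ℝ → Matrix (Fin n) (Fin n) ℂ)
    (hPm : ∀ x i j, HasDerivAt (fun y => Pm y i j)
      (((-Complex.I) • (A * Pm x * D) + Pm x * (D * ρ x - ρ x * D)) i j) x)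
    (hS : ∀ x i j, HasDerivAt (fun y => S y i j)
      ((Pm x * D * B * (Pm x)ᴴ) i j) x)
    (hid0 : A * S 0 - S 0 * Aᴴ = Complex.I • (Pm 0 * B * (Pm 0)ᴴ)) :
    ∀ x : ℝ, A * S x - S x * Aᴴ = Complex.I • (Pm x * B * (Pm x)ᴴ) := by
  have hBB : B * B = 1 := by
    have h1 : (fun k => (b k : ℂ) * (b k : ℂ)) = fun _ => (1 : ℂ) :=
      funext fun k => by rcases hb k with h | h <;> simp [h]
    rw [hB, Matrix.diagonal_mul_diagonal, h1, Matrix.diagonal_one]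
  have hDB : D * B = B * D := by
    have h1 : (fun k => (d k : ℂ) * (b k : ℂ)) = fun k => (b k : ℂ) * (d k : ℂ) :=
      funext fun k => mul_comm _ _
    rw [hD, hB, Matrix.diagonal_mul_diagonal, Matrix.diagonal_mul_diagonal, h1]
  have hDH : Dᴴ = D := by
    have h1 : (star fun k => (d k : ℂ)) = fun k => (d k : ℂ) := funext fun k => by simp
    rw [hD, Matrix.diagonal_conjTranspose, h1]
  have hBH : Bᴴ = B := by
    have h1 : (star fun k => (b k : ℂ)) = fun k => (b k : ℂ) := funext fun k => by simp
    rw [hB, Matrix.diagonal_conjTranspose, h1]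
  -- entrywise functions with zero derivative
  have key : ∀ i j, ∀ x : ℝ,
      HasDerivAt (fun y => (A * S y) i j - (S y * Aᴴ) i j
        - Complex.I * (Pm y * B * (Pm y)ᴴ) i j) 0 x := by
    intro i j x
    set P' : Matrix (Fin n) (Fin m) ℂ :=
      (-Complex.I) • (A * Pm x * D) + Pm x * (D * ρ x - ρ x * D) with hP'
    have hPB : ∀ i j, HasDerivAt (fun y => (Pm y * B) i j) ((P' * B) i j) x := by
      have := hdMul Pm (fun _ => B) P' 0 x (hPm x) (fun _ _ => hasDerivAt_const _ _)
      simpa using this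
    have hPH := hdConjT Pm P' x (hPm x)
    have hPBPH : ∀ i j, HasDerivAt (fun y => (Pm y * B * (Pm y)ᴴ) i j)
        ((P' * B * (Pm x)ᴴ + Pm x * B * P'ᴴ) i j) x :=
      hdMul (fun y => Pm y * B) (fun y => (Pm y)ᴴ) (P' * B) P'ᴴ x hPB hPH
    have hAS : ∀ i j, HasDerivAt (fun y => (A * S y) i j)
        ((A * (Pm x * D * B * (Pm x)ᴴ)) i j) x := by
      have := hdMul (fun _ => A) S 0 (Pm x * D * B * (Pm x)ᴴ) x
        (fun _ _ => hasDerivAt_const _ _) (hS x)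
      simpa using this
    have hSA : ∀ i j, HasDerivAt (fun y => (S y * Aᴴ) i j)
        (((Pm x * D * B * (Pm x)ᴴ) * Aᴴ) i j) x := by
      have := hdMul S (fun _ => Aᴴ) (Pm x * D * B * (Pm x)ᴴ) 0 x (hS x)
        (fun _ _ => hasDerivAt_const _ _)
      simpa using this
    have halg := keyAlg A D B (ρ x) (Pm x) hBB hDB hDH hBH (hρ x)
    have h := ((hAS i j).sub (hSA i j)).sub ((hPBPH i j).const_mul Complex.I)
    have hval : (A * (Pm x * D * B * (Pm x)ᴴ)) i j - ((Pm x * D * B * (Pm x)ᴴ) * Aᴴ) i j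
        - Complex.I * (P' * B * (Pm x)ᴴ + Pm x * B * P'ᴴ) i j = 0 := by
      have := congrFun (congrFun halg i) j
      simp only [Matrix.sub_apply, Matrix.smul_apply, smul_eq_mul] at this
      rw [hP']
      linear_combination this
    rw [hval] at h
    exact h
  intro x
  ext i j
  have hconst : ∀ i j, ∀ x : ℝ,
      (A * S x) i j - (S x * Aᴴ) i j - Complex.I * (Pm x * B * (Pm x)ᴴ) i j
      = (A * S 0) i j - (S 0 * Aᴴ) i j - Complex.I * (Pm 0 * B * (Pm 0)ᴴ) i j := by
    intro i j x
    exact is_const_of_deriv_eq_zero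
      (fun y => ((key i j y).differentiableAt : DifferentiableAt ℝ _ y))
      (fun y => (key i j y).deriv) x 0
  have h0 : (A * S 0) i j - (S 0 * Aᴴ) i j - Complex.I * (Pm 0 * B * (Pm 0)ᴴ) i j = 0 := by
    have := congrFun (congrFun hid0 i) j
    simp only [Matrix.sub_apply, Matrix.smul_apply, smul_eq_mul] at this
    linear_combination this
  have hx := (hconst i j x).trans h0
  simp only [Matrix.sub_apply, Matrix.smul_apply, smul_eq_mul]
  linear_combination hx
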